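/- arXiv:0901.3220 — 4 statements merged into one kernel-verified Lean document; each statement's English description precedes it below -/
import Mathlib

section
/- (Corollary 3: sparse matrices are approximable by sparse matrices with large entries.) Let p = p(n) satisfy p ≍ n. Suppose the sequence {Σ_p} of p×p real symmetric matrices is β-sparse with β ≤ 1/2 − η for some η > 0. Fix ε > 0 and a constant C > 0 (independent of n and p), let T_{β+ε}(Σ_p) be the version of Σ_p hard thresholded at level C n^{−(β+ε)}, and put R_{β+ε} = Σ_p − T_{β+ε}(Σ_p). Then ‖R_{β+ε}‖₂ → 0 as n → ∞. -/
open MeasureTheory ProbabilityTheory Matrix Filter Finset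

noncomputable section

open scoped Classical

/-- Spectral (operator) norm of a real `p × p` matrix: its largest singular value,
realized as the operator norm of the associated linear map on Euclidean space. -/
def specNorm {p : ℕ} (M : Matrix (Fin p) (Fin p) ℝ) : ℝ :=
  ‖Matrix.toEuclideanCLM (𝕜 := ℝ) M‖

/-- Adjacency matrix of a matrix: entry `1` where the matrix is nonzero, `0` elsewhere. -/
def adjMat {p : ℕ} (M : Matrix (Fin p) (Fin p) ℝ) : Matrix (Fin p) (Fin p) ℝ :=
  Matrix.of fun i j => if M i j ≠ 0 then (1 : ℝ) else 0

/-- β-sparsity of a sequence of matrices: the number of closed walks of (even) length `k`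
on the associated adjacency graphs, `φ_p(k) = trace (A_p ^ k)`, is at most
`f(k) * p^(β(k-1)+1)` with `f` independent of `p`. -/
def IsBetaSparse (pdim : ℕ → ℕ) (S : ∀ n, Matrix (Fin (pdim n)) (Fin (pdim n)) ℝ)
    (β : ℝ) : Prop :=
  ∃ f : ℕ → ℝ, (∀ k, 0 ≤ f k) ∧
    ∀ n, ∀ k : ℕ, Even k → k ≠ 0 →
      Matrix.trace (adjMat (S n) ^ k) ≤ f k * (pdim n : ℝ) ^ (β * ((k : ℝ) - 1) + 1)

/-- Hard thresholding of the entries of a matrix at level `t`. -/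
def hardThresh {p : ℕ} (t : ℝ) (M : Matrix (Fin p) (Fin p) ℝ) : Matrix (Fin p) (Fin p) ℝ :=
  Matrix.of fun i j => if t ≤ |M i j| then M i j else 0

/-- `p ≍ n` : `p = p(n) → ∞` with `p = O(n)` and `n = O(p)`. -/
def PDimAsymp (pdim : ℕ → ℕ) : Prop :=
  Tendsto pdim atTop atTop ∧
    ∃ C : ℝ, 0 < C ∧ ∀ n : ℕ, (pdim n : ℝ) ≤ C * n ∧ (n : ℝ) ≤ C * pdim n

/-- The (uncentered) sample covariance matrix `S_p = (1/n) ∑ X_i X_iᵀ`. -/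
def gramMat {Ω : Type*} (pdim : ℕ → ℕ) (X : ∀ n : ℕ, Fin n → Fin (pdim n) → Ω → ℝ)
    (n : ℕ) (ω : Ω) : Matrix (Fin (pdim n)) (Fin (pdim n)) ℝ :=
  Matrix.of fun a b => (1 / (n : ℝ)) * ∑ i : Fin n, X n i a ω * X n i b ω

/-- The rows of the `n × p(n)` data matrices are i.i.d.: measurable entries,
independent rows, identically distributed rows. -/
def IIDRows {Ω : Type*} [MeasurableSpace Ω] (μ : Measure Ω) (pdim : ℕ → ℕ)
    (X : ∀ n : ℕ, Fin n → Fin (pdim n) → Ω → ℝ) : Prop :=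
  (∀ n (i : Fin n) (j : Fin (pdim n)), Measurable (X n i j)) ∧
  (∀ n : ℕ, iIndepFun
      (fun i ω => fun j => X n i j ω) μ) ∧
  (∀ n : ℕ, ∀ i i' : Fin n,
      IdentDistrib (fun ω => fun j => X n i j ω) (fun ω => fun j => X n i' j ω) μ μ)

end


section AuxCor3

open scoped NNReal

private lemma specNorm_nonneg' {p : ℕ} (M : Matrix (Fin p) (Fin p) ℝ) : 0 ≤ specNorm M :=
  norm_nonneg _

private lemma specNorm_sq_le' {p : ℕ} (M : Matrix (Fin p) (Fin p) ℝ) :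
    specNorm M ^ 2 ≤ ∑ i, ∑ j, (M i j) ^ 2 := by
  have hS : (0:ℝ) ≤ ∑ i, ∑ j, (M i j) ^ 2 :=
    Finset.sum_nonneg fun i _ => Finset.sum_nonneg fun j _ => sq_nonneg _
  have h : specNorm M ≤ Real.sqrt (∑ i, ∑ j, (M i j) ^ 2) := by
    apply ContinuousLinearMap.opNorm_le_bound _ (Real.sqrt_nonneg _)
    intro x
    have hyx : ∀ i, (Matrix.toEuclideanCLM (𝕜 := ℝ) M x) i = ∑ j, M i j * x j := by
      intro i
      have := congrFun (Matrix.ofLp_toEuclideanCLM (𝕜 := ℝ) M x) i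
      simpa [Matrix.mulVec, dotProduct] using this
    have hx2 : ‖x‖ ^ 2 = ∑ j, (x j) ^ 2 := by
      rw [EuclideanSpace.norm_eq, Real.sq_sqrt]
      · simp [Real.norm_eq_abs, sq_abs]
      · exact Finset.sum_nonneg fun j _ => by positivity
    have hT2 : ‖Matrix.toEuclideanCLM (𝕜 := ℝ) M x‖ ^ 2
        ≤ (∑ i, ∑ j, (M i j) ^ 2) * ‖x‖ ^ 2 := by
      rw [EuclideanSpace.norm_eq, Real.sq_sqrt]
      · calc ∑ i, ‖(Matrix.toEuclideanCLM (𝕜 := ℝ) M x) i‖ ^ 2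
              = ∑ i, (∑ j, M i j * x j) ^ 2 := by
                simp [hyx, Real.norm_eq_abs, sq_abs]
          _ ≤ ∑ i, (∑ j, (M i j) ^ 2) * (∑ j, (x j) ^ 2) :=
              Finset.sum_le_sum fun i _ =>
                Finset.sum_mul_sq_le_sq_mul_sq _ _ _
          _ = (∑ i, ∑ j, (M i j) ^ 2) * ‖x‖ ^ 2 := by
              rw [hx2, ← Finset.sum_mul]
      · exact Finset.sum_nonneg fun i _ => by positivity
    have := Real.sqrt_le_sqrt hT2
    rwa [Real.sqrt_sq (norm_nonneg _), Real.sqrt_mul hS, Real.sqrt_sq (norm_nonneg _)] at this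
  calc specNorm M ^ 2 ≤ (Real.sqrt (∑ i, ∑ j, (M i j) ^ 2)) ^ 2 :=
        pow_le_pow_left₀ (specNorm_nonneg' M) h 2
    _ = _ := Real.sq_sqrt hS

set_option maxHeartbeats 1000000 in
private lemma specNorm_pow_two_pow' {p : ℕ} {M : Matrix (Fin p) (Fin p) ℝ}
    (hM : M.IsSymm) (j : ℕ) :
    specNorm (M ^ (2 ^ j)) = specNorm M ^ (2 ^ j) := by
  have hstar : star M = M := by
    ext i l
    simp [Matrix.star_apply, hM.apply i l]
  have hsa : _root_.IsSelfAdjoint (Matrix.toEuclideanCLM (𝕜 := ℝ) M) := by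
    show star _ = _
    rw [← map_star, hstar]
  have h := IsSelfAdjoint.nnnorm_pow_two_pow
    (E := EuclideanSpace ℝ (Fin p) →L[ℝ] EuclideanSpace ℝ (Fin p)) hsa j
  unfold specNorm
  rw [map_pow]
  calc ‖toEuclideanCLM (𝕜 := ℝ) M ^ 2 ^ j‖
      = ((‖toEuclideanCLM (𝕜 := ℝ) M ^ 2 ^ j‖₊ : ℝ≥0) : ℝ) := (coe_nnnorm _).symm
    _ = ((‖toEuclideanCLM (𝕜 := ℝ) M‖₊ ^ 2 ^ j : ℝ≥0) : ℝ) := by rw [h]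
    _ = ‖toEuclideanCLM (𝕜 := ℝ) M‖ ^ 2 ^ j := by push_cast; rfl

private lemma abs_pow_entry_le' {p : ℕ} (M N : Matrix (Fin p) (Fin p) ℝ)
    (h : ∀ i j, |M i j| ≤ N i j) (k : ℕ) : ∀ i j, |(M ^ k) i j| ≤ (N ^ k) i j := by
  induction k with
  | zero =>
    intro i j
    simp only [pow_zero, Matrix.one_apply]
    split <;> simp
  | succ k ih =>
    intro i j
    rw [pow_succ, pow_succ, Matrix.mul_apply, Matrix.mul_apply]
    calc |∑ l, (M ^ k) i l * M l j| ≤ ∑ l, |(M ^ k) i l * M l j| :=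
          Finset.abs_sum_le_sum_abs _ _
      _ ≤ ∑ l, (N ^ k) i l * N l j := by
          refine Finset.sum_le_sum fun l _ => ?_
          rw [abs_mul]
          exact mul_le_mul (ih i l) (h l j) (abs_nonneg _)
            (le_trans (abs_nonneg _) (ih i l))

private lemma trace_pow_eq' {p : ℕ} {M : Matrix (Fin p) (Fin p) ℝ} (hM : M.IsSymm) (m : ℕ) :
    ∑ i, ∑ j, ((M ^ m) i j) ^ 2 = Matrix.trace (M ^ (2 * m)) := by
  rw [two_mul, pow_add]
  simp only [Matrix.trace, Matrix.diag_apply, Matrix.mul_apply]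
  refine Finset.sum_congr rfl fun i _ => Finset.sum_congr rfl fun j _ => ?_
  rw [sq, (hM.pow m).apply i j]

/-- Key deterministic bound: for symmetric `M` dominated entrywise by `t • A`,
`‖M‖ ^ (2^(j+1)) ≤ t ^ (2^(j+1)) * trace (A ^ (2^(j+1)))`. -/
private lemma specNorm_pow_le_trace' {p : ℕ} {M A : Matrix (Fin p) (Fin p) ℝ} {t : ℝ}
    (hM : M.IsSymm) (_ht : 0 ≤ t) (hA : ∀ i j, |M i j| ≤ t * A i j) (j : ℕ) :
    specNorm M ^ (2 ^ (j + 1)) ≤ t ^ (2 ^ (j + 1)) * Matrix.trace (A ^ (2 ^ (j + 1))) := by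
  have hsq : specNorm M ^ (2 ^ (j + 1)) = (specNorm (M ^ (2 ^ j))) ^ 2 := by
    rw [specNorm_pow_two_pow' hM j, ← pow_mul, ← pow_succ]
  have hdom : ∀ i l, |M i l| ≤ (t • A) i l := by
    intro i l
    simpa [Matrix.smul_apply] using hA i l
  have hmid : Matrix.trace (M ^ (2 * 2 ^ j)) ≤ Matrix.trace ((t • A) ^ (2 * 2 ^ j)) := by
    simp only [Matrix.trace, Matrix.diag_apply]
    refine Finset.sum_le_sum fun i _ => ?_
    exact le_trans (le_abs_self _) (abs_pow_entry_le' M (t • A) hdom (2 * 2 ^ j) i i)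
  have hfinal : Matrix.trace ((t • A) ^ (2 * 2 ^ j))
      = t ^ (2 ^ (j + 1)) * Matrix.trace (A ^ (2 ^ (j + 1))) := by
    rw [smul_pow, Matrix.trace_smul, show 2 * 2 ^ j = 2 ^ (j + 1) by rw [pow_succ]; ring]
    simp [smul_eq_mul]
  calc specNorm M ^ (2 ^ (j + 1)) = (specNorm (M ^ (2 ^ j))) ^ 2 := hsq
    _ ≤ ∑ i, ∑ l, ((M ^ (2 ^ j)) i l) ^ 2 := specNorm_sq_le' _
    _ = Matrix.trace (M ^ (2 * 2 ^ j)) := trace_pow_eq' hM _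
    _ ≤ Matrix.trace ((t • A) ^ (2 * 2 ^ j)) := hmid
    _ = t ^ (2 ^ (j + 1)) * Matrix.trace (A ^ (2 ^ (j + 1))) := hfinal

end AuxCor3

/-- **Corollary 3** (El Karoui): if `{Σ_p}` is β-sparse with `β ≤ 1/2 - η`, `η > 0`,
and `p ≍ n`, then the part of `Σ_p` removed by hard thresholding at level
`C n^{-(β+ε)}` tends to zero in operator norm: `‖Σ_p - T_{β+ε}(Σ_p)‖₂ → 0`. -/
theorem statement7
    (pdim : ℕ → ℕ) (hdim : PDimAsymp pdim)
    (Sig : ∀ n, Matrix (Fin (pdim n)) (Fin (pdim n)) ℝ)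
    (hsymm : ∀ n, (Sig n).IsSymm)
    (β η : ℝ) (hη : 0 < η) (hβ0 : 0 ≤ β) (hβ : β ≤ 1 / 2 - η)
    (hsparse : IsBetaSparse pdim Sig β)
    (ε : ℝ) (hε : 0 < ε) (C : ℝ) (hC : 0 < C) :
    Tendsto
      (fun n : ℕ => specNorm
        (Sig n - hardThresh (C * (n : ℝ) ^ (-(β + ε))) (Sig n)))
      atTop (nhds 0) := by
  classical
  obtain ⟨htop, C₀, hC₀, hC₀'⟩ := hdim
  obtain ⟨f, hf0, hfb⟩ := hsparse
  -- choose an even power k = 2^(N+1) with ε * k > 1 - β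
  obtain ⟨N, hN⟩ := exists_nat_gt ((1 - β) / ε)
  set k : ℕ := 2 ^ (N + 1) with hk
  have hkN : (N : ℝ) < (k : ℝ) := by
    have : N < 2 ^ (N + 1) :=
      lt_of_lt_of_le (Nat.lt_two_pow_self (n := N)) (Nat.pow_le_pow_right (by norm_num) (Nat.le_succ N))
    exact_mod_cast this
  have hk1 : (1 : ℝ) ≤ (k : ℝ) := by
    have : (1 : ℕ) ≤ k := Nat.one_le_two_pow
    exact_mod_cast this
  have hεk : 1 - β < ε * (k : ℝ) := by
    have h1 : (1 - β) / ε < (k : ℝ) := lt_trans hN hkN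
    calc 1 - β = ((1 - β) / ε) * ε := by field_simp
      _ < (k : ℝ) * ε := mul_lt_mul_of_pos_right h1 hε
      _ = ε * (k : ℝ) := mul_comm _ _
  set s : ℝ := β * ((k : ℝ) - 1) + 1 with hs
  have hs0 : 0 ≤ s := by
    have : 0 ≤ β * ((k : ℝ) - 1) := mul_nonneg hβ0 (by linarith)
    simp only [hs]; linarith
  set e : ℝ := -(β + ε) * (k : ℝ) + s with he
  have he0 : e < 0 := by
    simp only [he, hs]; nlinarith
  set K : ℝ := C ^ k * f k * C₀ ^ s with hK
  have hK0 : 0 ≤ K := by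
    have h0 := hf0 k
    have h1 : (0:ℝ) ≤ C ^ k := pow_nonneg hC.le k
    have h2 : (0:ℝ) ≤ C₀ ^ s := Real.rpow_nonneg hC₀.le s
    positivity
  have hkne : k ≠ 0 := by positivity
  have hke : Even k := ⟨2 ^ N, by rw [hk, pow_succ]; ring⟩
  -- the main per-n deterministic bound
  have bound : ∀ n : ℕ, 1 ≤ n →
      specNorm (Sig n - hardThresh (C * (n : ℝ) ^ (-(β + ε))) (Sig n)) ^ k
        ≤ K * (n : ℝ) ^ e := by
    intro n hn1
    have hnR : (1 : ℝ) ≤ (n : ℝ) := by exact_mod_cast hn1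
    have hnpos : (0 : ℝ) < (n : ℝ) := lt_of_lt_of_le one_pos hnR
    set t : ℝ := C * (n : ℝ) ^ (-(β + ε)) with htdef
    have ht0 : 0 ≤ t := mul_nonneg hC.le (Real.rpow_nonneg hnpos.le _)
    set R : Matrix (Fin (pdim n)) (Fin (pdim n)) ℝ := Sig n - hardThresh t (Sig n) with hR
    have hRsymm : R.IsSymm := by
      show Rᵀ = R
      ext i j
      simp only [hR, Matrix.transpose_apply, Matrix.sub_apply, hardThresh, Matrix.of_apply]
      rw [(hsymm n).apply i j]
    have hRdom : ∀ i j, |R i j| ≤ t * adjMat (Sig n) i j := by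
      intro i j
      simp only [hR, Matrix.sub_apply, hardThresh, Matrix.of_apply, adjMat]
      by_cases h0 : Sig n i j = 0
      · simp only [h0, ne_eq, not_true_eq_false, if_false, abs_nonpos_iff]
        split <;> simp [ht0]
      · rw [if_pos h0, mul_one]
        by_cases hth : t ≤ |Sig n i j|
        · simpa [hth] using ht0
        · rw [if_neg hth]
          push_neg at hth
          simpa using hth.le
    have hmain := specNorm_pow_le_trace' (M := R) (A := adjMat (Sig n)) hRsymm ht0 hRdom N
    rw [← hk] at hmain
    have htr : Matrix.trace (adjMat (Sig n) ^ k) ≤ f k * (pdim n : ℝ) ^ s :=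
      hfb n k hke hkne
    have htk0 : (0:ℝ) ≤ t ^ k := pow_nonneg ht0 k
    have hp : (pdim n : ℝ) ^ s ≤ (C₀ * n) ^ s :=
      Real.rpow_le_rpow (Nat.cast_nonneg _) (hC₀' n).1 hs0
    have h1 : ((n:ℝ) ^ (-(β + ε))) ^ k = (n:ℝ) ^ (-(β + ε) * (k:ℝ)) := by
      rw [← Real.rpow_natCast ((n:ℝ) ^ (-(β + ε))) k, ← Real.rpow_mul hnpos.le]
    have h2 : (C₀ * (n:ℝ)) ^ s = C₀ ^ s * (n:ℝ) ^ s := Real.mul_rpow hC₀.le hnpos.le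
    have h3 : (n:ℝ) ^ e = (n:ℝ) ^ (-(β + ε) * (k:ℝ)) * (n:ℝ) ^ s := by
      rw [he]; exact Real.rpow_add hnpos _ _
    have heq : t ^ k * (f k * (C₀ * n) ^ s) = K * (n:ℝ) ^ e := by
      rw [htdef, mul_pow, h1, h2, hK, h3]
      clear_value s k
      generalize (n:ℝ) ^ (-(β + ε) * (k:ℝ)) = X
      generalize (n:ℝ) ^ s = Y
      generalize C₀ ^ s = Z
      ring
    calc specNorm R ^ k ≤ t ^ k * Matrix.trace (adjMat (Sig n) ^ k) := hmain
      _ ≤ t ^ k * (f k * (pdim n : ℝ) ^ s) := by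
          exact mul_le_mul_of_nonneg_left htr htk0
      _ ≤ t ^ k * (f k * (C₀ * n) ^ s) := by
          exact mul_le_mul_of_nonneg_left (mul_le_mul_of_nonneg_left hp (hf0 k)) htk0
      _ = K * (n:ℝ) ^ e := heq
  -- conclude via the limit K * n^e → 0
  have hlim : Tendsto (fun n : ℕ => K * (n:ℝ) ^ e) atTop (nhds 0) := by
    have h := (tendsto_rpow_neg_atTop (y := -e) (by linarith)).comp
      tendsto_natCast_atTop_atTop
    have h' : Tendsto (fun n : ℕ => (n:ℝ) ^ e) atTop (nhds 0) := by
      simpa [Function.comp_def, neg_neg] using h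
    simpa using h'.const_mul K
  rw [Metric.tendsto_atTop]
  intro δ hδ
  obtain ⟨N₁, hN₁⟩ := Metric.tendsto_atTop.mp hlim (δ ^ k) (pow_pos hδ k)
  refine ⟨max N₁ 1, fun n hn => ?_⟩
  have hn1 : 1 ≤ n := le_trans (le_max_right _ _) hn
  have hb := bound n hn1
  have h2 := hN₁ n (le_trans (le_max_left _ _) hn)
  rw [Real.dist_eq, sub_zero] at h2 ⊢
  rw [abs_of_nonneg (specNorm_nonneg' _)]
  have hlt : K * (n:ℝ) ^ e < δ ^ k := lt_of_abs_lt h2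
  exact lt_of_pow_lt_pow_left₀ k hδ.le (lt_of_le_of_lt hb hlt)
end

section
/- (Fact 1.) The set of β-sparse sequences of matrices is stable under addition: if {B_p} and {C_p} are two sequences of p×p real symmetric matrices, each of which is β-sparse, then the sequence {B_p + C_p} is β-sparse. -/
open MeasureTheory ProbabilityTheory Matrix Filter Finset

section Aux
variable {n : Type*} [Fintype n] [DecidableEq n]

lemma conj_pow_aux (V D : Matrix n n ℝ) (hV : star V * V = 1) (hV' : V * star V = 1)
    (k : ℕ) : (V * D * star V) ^ k = V * D ^ k * star V := by
  induction k with
  | zero => simp [pow_zero, hV']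
  | succ k ih =>
    rw [pow_succ, ih, pow_succ]
    calc V * D ^ k * star V * (V * D * star V)
        = V * D ^ k * (star V * V) * D * star V := by
          simp only [Matrix.mul_assoc]
      _ = V * (D ^ k * D) * star V := by rw [hV]; simp only [Matrix.mul_one, Matrix.mul_assoc]

lemma trace_conj_pow (V X : Matrix n n ℝ) (hV : star V * V = 1) (hV' : V * star V = 1)
    (k : ℕ) : ((star V * X * V) ^ k).trace = (X ^ k).trace := by
  have h : star V * X * V = star V * X * star (star V) := by rw [star_star]
  rw [h, conj_pow_aux (star V) X (by rwa [star_star]) (by rwa [star_star]) k, star_star,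
    Matrix.trace_mul_cycle, hV', Matrix.one_mul]

lemma trace_pow_eq_sum_eigenvalues {A : Matrix n n ℝ} (hA : A.IsHermitian) (k : ℕ) :
    (A ^ k).trace = ∑ i, hA.eigenvalues i ^ k := by
  set V : Matrix n n ℝ := (hA.eigenvectorUnitary : Matrix n n ℝ) with hVdef
  have hV : star V * V = 1 := Matrix.mem_unitaryGroup_iff'.mp hA.eigenvectorUnitary.2
  have hV' : V * star V = 1 := Matrix.mem_unitaryGroup_iff.mp hA.eigenvectorUnitary.2
  have hd : RCLike.ofReal ∘ hA.eigenvalues = hA.eigenvalues := by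
    funext i; simp
  conv_lhs => rw [hA.spectral_theorem, hd, Unitary.conjStarAlgAut_apply]
  rw [conj_pow_aux V _ hV hV' k, Matrix.trace_mul_cycle, hV,
    Matrix.one_mul, Matrix.diagonal_pow, Matrix.trace_diagonal]
  simp [Pi.pow_apply]

lemma peierls {A : Matrix n n ℝ} (hA : A.IsHermitian) {k : ℕ} (hk : Even k) :
    ∑ i, (A i i) ^ k ≤ (A ^ k).trace := by
  set V : Matrix n n ℝ := (hA.eigenvectorUnitary : Matrix n n ℝ) with hVdef
  have hV : star V * V = 1 := Matrix.mem_unitaryGroup_iff'.mp hA.eigenvectorUnitary.2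
  have hV' : V * star V = 1 := Matrix.mem_unitaryGroup_iff.mp hA.eigenvectorUnitary.2
  have hd : RCLike.ofReal ∘ hA.eigenvalues = hA.eigenvalues := by funext i; simp
  have hstar : ∀ i j, star V j i = V i j := by
    intro i j
    simp [Matrix.conjTranspose_apply]
  have hdiag : ∀ i, A i i = ∑ j, (V i j) ^ 2 * hA.eigenvalues j := by
    intro i
    conv_lhs => rw [hA.spectral_theorem, hd, Unitary.conjStarAlgAut_apply]
    rw [Matrix.mul_assoc, Matrix.mul_apply]
    refine Finset.sum_congr rfl fun j _ => ?_
    rw [Matrix.diagonal_mul, hstar i j]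
    ring
  have hrow : ∀ i, ∑ j, (V i j) ^ 2 = 1 := by
    intro i
    have := congrArg (fun M => M i i) hV'
    simpa [Matrix.mul_apply, Matrix.one_apply, hstar, sq] using this
  have hcol : ∀ j, ∑ i, (V i j) ^ 2 = 1 := by
    intro j
    have := congrArg (fun M => M j j) hV
    simpa [Matrix.mul_apply, Matrix.one_apply, hstar, sq] using this
  rw [trace_pow_eq_sum_eigenvalues hA k]
  have key : ∀ i, (A i i) ^ k ≤ ∑ j, (V i j) ^ 2 * hA.eigenvalues j ^ k := by
    intro i
    have hconv : ConvexOn ℝ Set.univ fun x : ℝ => x ^ k := hk.convexOn_pow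
    have := hconv.map_sum_le (t := Finset.univ) (w := fun j => (V i j) ^ 2)
      (p := fun j => hA.eigenvalues j) (fun j _ => sq_nonneg _) (hrow i)
      (fun j _ => Set.mem_univ _)
    simp only [smul_eq_mul] at this
    calc (A i i) ^ k = (∑ j, (V i j) ^ 2 * hA.eigenvalues j) ^ k := by rw [hdiag i]
      _ ≤ ∑ j, (V i j) ^ 2 * hA.eigenvalues j ^ k := this
  calc ∑ i, (A i i) ^ k ≤ ∑ i, ∑ j, (V i j) ^ 2 * hA.eigenvalues j ^ k :=
        Finset.sum_le_sum fun i _ => key i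
    _ = ∑ j, (∑ i, (V i j) ^ 2) * hA.eigenvalues j ^ k := by
        rw [Finset.sum_comm]; congr 1; funext j; rw [Finset.sum_mul]
    _ = ∑ j, hA.eigenvalues j ^ k := by
        congr 1; funext j; rw [hcol j, one_mul]

lemma trace_add_pow_le {X Y : Matrix n n ℝ} (hX : X.IsHermitian) (hY : Y.IsHermitian)
    {k : ℕ} (hk : Even k) :
    ((X + Y) ^ k).trace ≤ 2 ^ (k - 1) * ((X ^ k).trace + (Y ^ k).trace) := by
  have hM : (X + Y).IsHermitian := hX.add hY
  set V : Matrix n n ℝ := (hM.eigenvectorUnitary : Matrix n n ℝ) with hVdef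
  have hV : star V * V = 1 := Matrix.mem_unitaryGroup_iff'.mp hM.eigenvectorUnitary.2
  have hV' : V * star V = 1 := Matrix.mem_unitaryGroup_iff.mp hM.eigenvectorUnitary.2
  have hd : RCLike.ofReal ∘ hM.eigenvalues = hM.eigenvalues := by funext i; simp
  have hdiag : star V * (X + Y) * V = Matrix.diagonal hM.eigenvalues := by
    rw [← hd, ← hM.conjStarAlgAut_star_eigenvectorUnitary, Unitary.conjStarAlgAut_apply,
      Unitary.coe_star, star_star]
  have hX' : (star V * X * V).IsHermitian := by
    simpa [Matrix.star_eq_conjTranspose] using Matrix.isHermitian_conjTranspose_mul_mul V hX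
  have hY' : (star V * Y * V).IsHermitian := by
    simpa [Matrix.star_eq_conjTranspose] using Matrix.isHermitian_conjTranspose_mul_mul V hY
  have hev : ∀ i, hM.eigenvalues i = (star V * X * V) i i + (star V * Y * V) i i := by
    intro i
    have h1 : star V * (X + Y) * V = star V * X * V + star V * Y * V := by
      rw [Matrix.mul_add, Matrix.add_mul]
    have := congrArg (fun M => M i i) (h1.symm.trans hdiag)
    simpa [Matrix.diagonal_apply_eq] using this.symm
  calc ((X + Y) ^ k).trace = ∑ i, hM.eigenvalues i ^ k := trace_pow_eq_sum_eigenvalues hM k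
    _ ≤ ∑ i, 2 ^ (k - 1) * (((star V * X * V) i i) ^ k + ((star V * Y * V) i i) ^ k) := by
        apply Finset.sum_le_sum
        intro i _
        rw [hev i]
        exact hk.add_pow_le
    _ = 2 ^ (k - 1) * ((∑ i, ((star V * X * V) i i) ^ k) + ∑ i, ((star V * Y * V) i i) ^ k) := by
        rw [← Finset.mul_sum, Finset.sum_add_distrib]
    _ ≤ 2 ^ (k - 1) * (((star V * X * V) ^ k).trace + ((star V * Y * V) ^ k).trace) := by
        apply mul_le_mul_of_nonneg_left (add_le_add (peierls hX' hk) (peierls hY' hk))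
        positivity
    _ = 2 ^ (k - 1) * ((X ^ k).trace + (Y ^ k).trace) := by
        rw [trace_conj_pow V X hV hV' k, trace_conj_pow V Y hV hV' k]

lemma pow_entry_mono {M N : Matrix n n ℝ} (h0 : ∀ i j, 0 ≤ M i j)
    (h : ∀ i j, M i j ≤ N i j) (k : ℕ) :
    ∀ i j, 0 ≤ (M ^ k) i j ∧ (M ^ k) i j ≤ (N ^ k) i j := by
  induction k with
  | zero =>
    intro i j
    simp only [pow_zero, Matrix.one_apply]
    split <;> simp
  | succ k ih =>
    intro i j
    rw [pow_succ, pow_succ, Matrix.mul_apply, Matrix.mul_apply]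
    constructor
    · exact Finset.sum_nonneg fun l _ => mul_nonneg (ih i l).1 (h0 l j)
    · exact Finset.sum_le_sum fun l _ =>
        mul_le_mul (ih i l).2 (h l j) (h0 l j) ((ih i l).1.trans (ih i l).2)

lemma trace_pow_mono {M N : Matrix n n ℝ} (h0 : ∀ i j, 0 ≤ M i j)
    (h : ∀ i j, M i j ≤ N i j) (k : ℕ) : (M ^ k).trace ≤ (N ^ k).trace :=
  Finset.sum_le_sum fun i _ => (pow_entry_mono h0 h k i i).2

end Aux

section AdjAux

lemma adjMat_isHermitian {p : ℕ} {M : Matrix (Fin p) (Fin p) ℝ} (hM : M.IsSymm) :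
    (adjMat M).IsHermitian := by
  rw [Matrix.IsHermitian, Matrix.conjTranspose_eq_transpose_of_trivial]
  exact Matrix.IsSymm.ext fun i j => by simp [adjMat, hM.apply i j]

lemma adjMat_nonneg {p : ℕ} (M : Matrix (Fin p) (Fin p) ℝ) (i j : Fin p) :
    0 ≤ adjMat M i j := by
  simp only [adjMat, Matrix.of_apply]
  split <;> norm_num

lemma adjMat_add_le {p : ℕ} (B C : Matrix (Fin p) (Fin p) ℝ) (i j : Fin p) :
    adjMat (B + C) i j ≤ (adjMat B + adjMat C) i j := by
  simp only [adjMat, Matrix.of_apply, Matrix.add_apply]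
  by_cases hb : B i j = 0 <;> by_cases hc : C i j = 0 <;>
    simp [hb, hc] <;> split_ifs with h <;> norm_num [h]

end AdjAux

/-- **Fact 1** (El Karoui): the set of β-sparse sequences of symmetric matrices is
stable under addition. -/
theorem statement9
    (pdim : ℕ → ℕ)
    (B C : ∀ n, Matrix (Fin (pdim n)) (Fin (pdim n)) ℝ)
    (hBsymm : ∀ n, (B n).IsSymm) (hCsymm : ∀ n, (C n).IsSymm)
    (β : ℝ) (hβ0 : 0 ≤ β) (hβ1 : β ≤ 1)
    (hB : IsBetaSparse pdim B β) (hC : IsBetaSparse pdim C β) :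
    IsBetaSparse pdim (fun n => B n + C n) β := by
  obtain ⟨fB, hfB0, hfB⟩ := hB
  obtain ⟨fC, hfC0, hfC⟩ := hC
  refine ⟨fun k => 2 ^ (k - 1) * (fB k + fC k),
    fun k => mul_nonneg (by positivity) (add_nonneg (hfB0 k) (hfC0 k)), ?_⟩
  intro n k hk hk0
  have hAB : (adjMat (B n)).IsHermitian := adjMat_isHermitian (hBsymm n)
  have hAC : (adjMat (C n)).IsHermitian := adjMat_isHermitian (hCsymm n)
  calc (adjMat ((fun n => B n + C n) n) ^ k).trace
      ≤ ((adjMat (B n) + adjMat (C n)) ^ k).trace :=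
        trace_pow_mono (adjMat_nonneg _) (adjMat_add_le (B n) (C n)) k
    _ ≤ 2 ^ (k - 1) * ((adjMat (B n) ^ k).trace + (adjMat (C n) ^ k).trace) :=
        trace_add_pow_le hAB hAC hk
    _ ≤ 2 ^ (k - 1) * (fB k * (pdim n : ℝ) ^ (β * ((k : ℝ) - 1) + 1)
          + fC k * (pdim n : ℝ) ^ (β * ((k : ℝ) - 1) + 1)) := by
        apply mul_le_mul_of_nonneg_left (add_le_add (hfB n k hk hk0) (hfC n k hk hk0))
        positivity
    _ = 2 ^ (k - 1) * (fB k + fC k) * (pdim n : ℝ) ^ (β * ((k : ℝ) - 1) + 1) := by ring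
end

section
/- (Trace bound for sparse matrices.) Let M be a p×p real symmetric matrix, let m = max_{i,j} |M(i,j)|, and suppose that for some β ∈ [0,1] and f : ℕ → ℝ₊ one has trace(A(M)^k) ≤ f(k) p^{β(k−1)+1} for every even integer k ≥ 2, where A(M) is the adjacency matrix of M. Then for every even integer k ≥ 2: ‖M‖₂ ≤ |trace(M^k)|^{1/k} ≤ m · p^{β(1−1/k)+1/k} · f(k)^{1/k}. -/
open MeasureTheory ProbabilityTheory Matrix Filter Finset

section Aux

open Matrix

lemma adjPow_nonneg {p : ℕ} (M : Matrix (Fin p) (Fin p) ℝ) (k : ℕ) (i j : Fin p) :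
    0 ≤ (adjMat M ^ k) i j := by
  induction k generalizing i j with
  | zero => simp [Matrix.one_apply]; split <;> norm_num
  | succ k ih =>
    rw [pow_succ, Matrix.mul_apply]
    refine Finset.sum_nonneg fun l _ => mul_nonneg (ih i l) ?_
    simp only [adjMat, Matrix.of_apply]
    split <;> norm_num

lemma entry_pow_le {p : ℕ} (M : Matrix (Fin p) (Fin p) ℝ) (m : ℝ) (hm0 : 0 ≤ m)
    (hm : ∀ i j, |M i j| ≤ m) (k : ℕ) :
    ∀ i j, |(M ^ k) i j| ≤ m ^ k * (adjMat M ^ k) i j := by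
  induction k with
  | zero =>
    intro i j
    simp only [pow_zero, one_mul, Matrix.one_apply]
    split <;> simp
  | succ k ih =>
    intro i j
    simp only [pow_succ, Matrix.mul_apply, Finset.mul_sum]
    refine (Finset.abs_sum_le_sum_abs _ _).trans (Finset.sum_le_sum fun l _ => ?_)
    rw [abs_mul]
    have hA : |M l j| ≤ m * (adjMat M) l j := by
      by_cases h : M l j = 0
      · simp [adjMat, h]
      · simpa [adjMat, h] using hm l j
    calc |(M ^ k) i l| * |M l j|
        ≤ (m ^ k * (adjMat M ^ k) i l) * (m * adjMat M l j) :=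
          mul_le_mul (ih i l) hA (abs_nonneg _)
            (mul_nonneg (pow_nonneg hm0 k) (adjPow_nonneg M k i l))
      _ = m ^ k * m * ((adjMat M ^ k) i l * adjMat M l j) := by ring

lemma conj_pow_unitary {n : Type*} [Fintype n] [DecidableEq n]
    (U D : Matrix n n ℝ) (hU : star U * U = 1) (hU' : U * star U = 1) (k : ℕ) :
    (U * D * star U) ^ k = U * D ^ k * star U := by
  induction k with
  | zero => rw [pow_zero, pow_zero, Matrix.mul_one, hU']
  | succ k ih =>
    rw [pow_succ, pow_succ, ih]
    calc U * D ^ k * star U * (U * D * star U)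
        = U * D ^ k * (star U * U) * D * star U := by simp only [Matrix.mul_assoc]
      _ = U * (D ^ k * D) * star U := by rw [hU]; simp only [Matrix.mul_assoc, Matrix.one_mul]
      _ = U * (D ^ k * D) * star U := rfl

lemma trace_pow_eq_sum_eigenvalues_s10 {p : ℕ} {M : Matrix (Fin p) (Fin p) ℝ}
    (hM : M.IsHermitian) (k : ℕ) :
    Matrix.trace (M ^ k) = ∑ i, hM.eigenvalues i ^ k := by
  have hU : star (hM.eigenvectorUnitary : Matrix (Fin p) (Fin p) ℝ) *
      (hM.eigenvectorUnitary : Matrix (Fin p) (Fin p) ℝ) = 1 :=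
    Unitary.star_mul_self_of_mem (SetLike.coe_mem _)
  nth_rewrite 1 [hM.spectral_theorem, Unitary.conjStarAlgAut_apply]
  rw [conj_pow_unitary _ _ hU (Unitary.mul_star_self_of_mem (SetLike.coe_mem _)), Matrix.trace_mul_cycle, hU,
    Matrix.one_mul, Matrix.diagonal_pow, Matrix.trace_diagonal]
  simp

lemma specNorm_le_of_eigenvalues {p : ℕ} {M : Matrix (Fin p) (Fin p) ℝ}
    (hM : M.IsHermitian) (C : ℝ) (hC0 : 0 ≤ C)
    (hC : ∀ i, |hM.eigenvalues i| ≤ C) : specNorm M ≤ C := by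
  rw [specNorm]
  refine ContinuousLinearMap.opNorm_le_bound _ hC0 fun x => ?_
  set T := Matrix.toEuclideanCLM (𝕜 := ℝ) M with hT
  set b := hM.eigenvectorBasis with hb
  have hTb : ∀ j, T (b j) = hM.eigenvalues j • b j := by
    intro j
    apply (WithLp.equiv 2 _).injective
    rw [WithLp.equiv_apply, WithLp.equiv_apply, Matrix.ofLp_toEuclideanCLM]
    ext i
    have := congrFun (hM.mulVec_eigenvectorBasis j) i
    simpa using this
  have hx : T x = ∑ j, (hM.eigenvalues j * b.repr x j) • b j := by
    conv_lhs => rw [← b.sum_repr x, map_sum]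
    refine Finset.sum_congr rfl fun j _ => ?_
    rw [_root_.map_smul, hTb j, smul_smul, mul_comm]
  have hrepr : ∀ i, b.repr (T x) i = hM.eigenvalues i * b.repr x i := by
    intro i
    rw [OrthonormalBasis.repr_apply_apply, hx,
      b.orthonormal.inner_right_fintype]
  have h1 : ‖T x‖ ^ 2 ≤ (C * ‖x‖) ^ 2 := by
    rw [← b.repr.norm_map (T x), ← b.repr.norm_map x]
    rw [EuclideanSpace.norm_eq, EuclideanSpace.norm_eq]
    rw [Real.sq_sqrt (by positivity), mul_pow, Real.sq_sqrt (by positivity),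
      Finset.mul_sum]
    refine Finset.sum_le_sum fun i _ => ?_
    rw [hrepr i]
    have h2 : |hM.eigenvalues i * b.repr x i| ≤ C * |b.repr x i| := by
      rw [abs_mul]
      exact mul_le_mul_of_nonneg_right (hC i) (abs_nonneg _)
    calc ‖hM.eigenvalues i * b.repr x i‖ ^ 2 = |hM.eigenvalues i * b.repr x i| ^ 2 := by
          rw [Real.norm_eq_abs]
      _ ≤ (C * |b.repr x i|) ^ 2 := by
          exact pow_le_pow_left₀ (abs_nonneg _) h2 2
      _ = C ^ 2 * ‖b.repr x i‖ ^ 2 := by rw [Real.norm_eq_abs]; ring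
  nlinarith [norm_nonneg (T x), norm_nonneg x, mul_nonneg hC0 (norm_nonneg x)]

end Aux

/-- **Lemma A.1** (El Karoui): trace bound for β-sparse symmetric matrices. For a
symmetric `M` with entries bounded by `m` and `trace(A(M)^k) ≤ f(k) p^{β(k-1)+1}` for
even `k`, one has `‖M‖₂ ≤ |trace(M^k)|^{1/k} ≤ m p^{β(1-1/k)+1/k} f(k)^{1/k}`. -/
theorem statement10
    {p : ℕ} (M : Matrix (Fin p) (Fin p) ℝ) (hMsymm : M.IsSymm)
    (m : ℝ) (hm0 : 0 ≤ m) (hm : ∀ i j, |M i j| ≤ m)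
    (β : ℝ) (hβ0 : 0 ≤ β) (hβ1 : β ≤ 1)
    (f : ℕ → ℝ) (hf : ∀ k, 0 ≤ f k)
    (hsp : ∀ k : ℕ, Even k → 2 ≤ k →
      Matrix.trace (adjMat M ^ k) ≤ f k * (p : ℝ) ^ (β * ((k : ℝ) - 1) + 1)) :
    ∀ k : ℕ, Even k → 2 ≤ k →
      specNorm M ≤ |Matrix.trace (M ^ k)| ^ ((k : ℝ)⁻¹) ∧
      |Matrix.trace (M ^ k)| ^ ((k : ℝ)⁻¹) ≤
        m * (p : ℝ) ^ (β * (1 - (k : ℝ)⁻¹) + (k : ℝ)⁻¹) * f k ^ ((k : ℝ)⁻¹) := by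
  intro k hke hk2
  have hkne : k ≠ 0 := by omega
  have hk0 : (0:ℝ) < (k : ℝ) := by positivity
  have hk0' : (k : ℝ) ≠ 0 := ne_of_gt hk0
  have hM : M.IsHermitian := by
    rw [Matrix.IsHermitian, Matrix.conjTranspose]
    exact Matrix.isHermitian_iff_isSymm.mpr hMsymm
  set μ := hM.eigenvalues with hμ
  have htr : Matrix.trace (M ^ k) = ∑ i, μ i ^ k := trace_pow_eq_sum_eigenvalues_s10 hM k
  have ht0 : 0 ≤ Matrix.trace (M ^ k) := by
    rw [htr]; exact Finset.sum_nonneg fun i _ => hke.pow_nonneg _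
  have habs : |Matrix.trace (M ^ k)| = Matrix.trace (M ^ k) := abs_of_nonneg ht0
  constructor
  · -- first inequality
    by_cases hp : p = 0
    · subst hp
      have h0 : specNorm M ≤ 0 := by
        rw [specNorm]
        refine ContinuousLinearMap.opNorm_le_bound _ le_rfl fun x => ?_
        have : ‖Matrix.toEuclideanCLM (𝕜 := ℝ) M x‖ = 0 := by
          rw [EuclideanSpace.norm_eq]
          simp
        simp [this]
      exact h0.trans (Real.rpow_nonneg (abs_nonneg _) _)
    · have : Nonempty (Fin p) := ⟨⟨0, Nat.pos_of_ne_zero hp⟩⟩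
      obtain ⟨i0, -, hmax⟩ := Finset.exists_max_image Finset.univ (fun i => |μ i|)
        ⟨Classical.arbitrary (Fin p), Finset.mem_univ _⟩
      set C := |μ i0| with hC
      have hC0 : 0 ≤ C := abs_nonneg _
      have h1 : specNorm M ≤ C :=
        specNorm_le_of_eigenvalues hM C hC0 fun i => hmax i (Finset.mem_univ i)
      have h2 : C ^ k ≤ Matrix.trace (M ^ k) := by
        rw [htr, hC, hke.pow_abs]
        exact Finset.single_le_sum (f := fun i => μ i ^ k)
          (fun i _ => hke.pow_nonneg _) (Finset.mem_univ i0)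
      have h3 : C ≤ |Matrix.trace (M ^ k)| ^ ((k : ℝ)⁻¹) := by
        rw [habs]
        calc C = (C ^ k) ^ ((k : ℝ)⁻¹) := by
              rw [← Real.rpow_natCast C k, ← Real.rpow_mul hC0, mul_inv_cancel₀ hk0',
                Real.rpow_one]
          _ ≤ Matrix.trace (M ^ k) ^ ((k : ℝ)⁻¹) :=
              Real.rpow_le_rpow (pow_nonneg hC0 k) h2 (by positivity)
      exact h1.trans h3
  · -- second inequality
    have h1 : Matrix.trace (M ^ k) ≤ m ^ k * Matrix.trace (adjMat M ^ k) := by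
      rw [Matrix.trace, Matrix.trace, Finset.mul_sum]
      refine Finset.sum_le_sum fun i _ => ?_
      exact (le_abs_self _).trans (entry_pow_le M m hm0 hm k i i)
    have h2 : Matrix.trace (M ^ k) ≤
        m ^ k * (f k * (p : ℝ) ^ (β * ((k : ℝ) - 1) + 1)) :=
      h1.trans (mul_le_mul_of_nonneg_left (hsp k hke hk2) (pow_nonneg hm0 k))
    have hfp : 0 ≤ f k * (p : ℝ) ^ (β * ((k : ℝ) - 1) + 1) :=
      mul_nonneg (hf k) (Real.rpow_nonneg (Nat.cast_nonneg p) _)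
    rw [habs]
    calc Matrix.trace (M ^ k) ^ ((k : ℝ)⁻¹)
        ≤ (m ^ k * (f k * (p : ℝ) ^ (β * ((k : ℝ) - 1) + 1))) ^ ((k : ℝ)⁻¹) :=
          Real.rpow_le_rpow ht0 h2 (by positivity)
      _ = (m ^ k) ^ ((k : ℝ)⁻¹) * ((f k) ^ ((k : ℝ)⁻¹) *
            ((p : ℝ) ^ (β * ((k : ℝ) - 1) + 1)) ^ ((k : ℝ)⁻¹)) := by
          rw [Real.mul_rpow (pow_nonneg hm0 k) hfp,
            Real.mul_rpow (hf k) (Real.rpow_nonneg (Nat.cast_nonneg p) _)]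
      _ = m * (p : ℝ) ^ (β * (1 - (k : ℝ)⁻¹) + (k : ℝ)⁻¹) * f k ^ ((k : ℝ)⁻¹) := by
          rw [← Real.rpow_natCast m k, ← Real.rpow_mul hm0, mul_inv_cancel₀ hk0',
            Real.rpow_one, ← Real.rpow_mul (Nat.cast_nonneg p)]
          have he : (β * ((k : ℝ) - 1) + 1) * (k : ℝ)⁻¹
              = β * (1 - (k : ℝ)⁻¹) + (k : ℝ)⁻¹ := by
            linear_combination β * (mul_inv_cancel₀ hk0')
          rw [he]
          ring
end

section
/- (Moment bound for ratios, used for sample correlations.) Let k ≥ 1 be an integer, ρ ∈ [−1,1] and ε ∈ (0,1). Let F and G be real random variables with G ≠ 0 almost surely and |F/G| ≤ 1 almost surely. Then E[(F/G − ρ)^{2k}] ≤ (2^{2k}/(1−ε)^{2k}) · (E[(F − ρ)^{2k}] + ρ^{2k} E[(G − 1)^{2k}]) + 2^{2k} P(|G − 1| ≥ ε). In particular, if E[(F_n − ρ)^{2k}] = O(n^{−k}) and E[(G_n − 1)^{2k}] = O(n^{−k}) for a sequence of such pairs (F_n, G_n), then E[(F_n/G_n − ρ)^{2k}] = O(n^{−k}).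 -/
open MeasureTheory ProbabilityTheory Matrix Filter Finset

lemma st17_add_pow {a b : ℝ} (ha : 0 ≤ a) (hb : 0 ≤ b) (m : ℕ) :
    (a + b) ^ m ≤ 2 ^ m * (a ^ m + b ^ m) := by
  have h1 : (a + b) ^ m ≤ (2 * max a b) ^ m := by
    apply pow_le_pow_left₀ (by positivity)
    rcases le_total a b with h | h
    · rw [max_eq_right h]; linarith
    · rw [max_eq_left h]; linarith
  have h2 : (max a b) ^ m ≤ a ^ m + b ^ m := by
    rcases le_total a b with h | h
    · rw [max_eq_right h]; nlinarith [pow_nonneg ha m]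
    · rw [max_eq_left h]; nlinarith [pow_nonneg hb m]
  calc (a + b) ^ m ≤ (2 * max a b) ^ m := h1
    _ = 2 ^ m * (max a b) ^ m := mul_pow _ _ _
    _ ≤ 2 ^ m * (a ^ m + b ^ m) := by
        exact mul_le_mul_of_nonneg_left h2 (by positivity)

lemma st17_ptwise (k : ℕ) (ρ ε f g : ℝ) (hρ : |ρ| ≤ 1) (hε0 : 0 < ε) (hε1 : ε < 1)
    (hg : g ≠ 0) (hcase : |g - 1| < ε) :
    (f / g - ρ) ^ (2 * k) ≤
      (2 ^ (2 * k) / (1 - ε) ^ (2 * k)) * ((f - ρ) ^ (2 * k) + ρ ^ (2 * k) * (g - 1) ^ (2 * k)) := by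
  have hev : Even (2 * k) := even_two_mul k
  have hεpos : (0 : ℝ) < 1 - ε := by linarith
  have hgabs : 1 - ε ≤ |g| := by
    have h1 : |(1 : ℝ)| - |g| ≤ |1 - g| := abs_sub_abs_le_abs_sub 1 g
    rw [abs_sub_comm] at h1
    simp only [abs_one] at h1
    linarith
  have key : |f / g - ρ| ≤ (|f - ρ| + |ρ| * |g - 1|) / (1 - ε) := by
    have h1 : f / g - ρ = (f - ρ * g) / g := by field_simp
    rw [h1, abs_div]
    have hnum : |f - ρ * g| ≤ |f - ρ| + |ρ| * |g - 1| := by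
      have h2 : f - ρ * g = (f - ρ) - ρ * (g - 1) := by ring
      rw [h2]
      calc |(f - ρ) - ρ * (g - 1)| ≤ |f - ρ| + |ρ * (g - 1)| := abs_sub _ _
        _ = |f - ρ| + |ρ| * |g - 1| := by rw [abs_mul]
    exact div_le_div₀ (by positivity) hnum hεpos hgabs
  calc (f / g - ρ) ^ (2 * k) = |f / g - ρ| ^ (2 * k) := (hev.pow_abs _).symm
    _ ≤ ((|f - ρ| + |ρ| * |g - 1|) / (1 - ε)) ^ (2 * k) :=
        pow_le_pow_left₀ (abs_nonneg _) key _
    _ = (|f - ρ| + |ρ| * |g - 1|) ^ (2 * k) / (1 - ε) ^ (2 * k) := div_pow _ _ _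
    _ ≤ 2 ^ (2 * k) * (|f - ρ| ^ (2 * k) + (|ρ| * |g - 1|) ^ (2 * k)) / (1 - ε) ^ (2 * k) := by
        apply div_le_div_of_nonneg_right _ (by positivity)
        exact st17_add_pow (abs_nonneg _) (by positivity) _
    _ = (2 ^ (2 * k) / (1 - ε) ^ (2 * k)) * ((f - ρ) ^ (2 * k) + ρ ^ (2 * k) * (g - 1) ^ (2 * k)) := by
        rw [mul_pow, hev.pow_abs (f - ρ), hev.pow_abs ρ, hev.pow_abs (g - 1)]
        ring

/-- Moment bound for ratios, used for sample correlations: if `|F/G| ≤ 1` a.s. and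
`G ≠ 0` a.s., then
`E[(F/G - ρ)^{2k}] ≤ (2^{2k}/(1-ε)^{2k}) (E[(F-ρ)^{2k}] + ρ^{2k} E[(G-1)^{2k}])
  + 2^{2k} P(|G-1| ≥ ε)`;
in particular `O(n^{-k})` moment bounds for `F_n - ρ` and `G_n - 1` imply an
`O(n^{-k})` moment bound for `F_n/G_n - ρ`. -/
theorem statement17
    {Ω : Type*} [MeasurableSpace Ω] (μ : Measure Ω) [IsProbabilityMeasure μ]
    (k : ℕ) (hk : 1 ≤ k)
    (ρ ε : ℝ) (hρ : ρ ∈ Set.Icc (-1 : ℝ) 1) (hε : ε ∈ Set.Ioo (0 : ℝ) 1)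
    (F G : ℕ → Ω → ℝ)
    (hFmeas : ∀ n, Measurable (F n)) (hGmeas : ∀ n, Measurable (G n))
    (hG0 : ∀ n, ∀ᵐ ω ∂μ, G n ω ≠ 0)
    (hratio : ∀ n, ∀ᵐ ω ∂μ, |F n ω / G n ω| ≤ 1)
    (hFint : ∀ n, Integrable (fun ω => (F n ω - ρ) ^ (2 * k)) μ)
    (hGint : ∀ n, Integrable (fun ω => (G n ω - 1) ^ (2 * k)) μ) :
    (∀ n, ∫ ω, (F n ω / G n ω - ρ) ^ (2 * k) ∂μ ≤
        (2 ^ (2 * k) / (1 - ε) ^ (2 * k)) *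
            ((∫ ω, (F n ω - ρ) ^ (2 * k) ∂μ) +
              ρ ^ (2 * k) * ∫ ω, (G n ω - 1) ^ (2 * k) ∂μ) +
          2 ^ (2 * k) * (μ {ω | ε ≤ |G n ω - 1|}).toReal) ∧
    (((fun n : ℕ => ∫ ω, (F n ω - ρ) ^ (2 * k) ∂μ) =O[atTop]
        fun n : ℕ => ((n : ℝ) ^ k)⁻¹) →
      ((fun n : ℕ => ∫ ω, (G n ω - 1) ^ (2 * k) ∂μ) =O[atTop]
        fun n : ℕ => ((n : ℝ) ^ k)⁻¹) →
      ((fun n : ℕ => ∫ ω, (F n ω / G n ω - ρ) ^ (2 * k) ∂μ) =O[atTop]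
        fun n : ℕ => ((n : ℝ) ^ k)⁻¹)) := by
  obtain ⟨hρ1, hρ2⟩ := hρ
  obtain ⟨hε0, hε1⟩ := hε
  have hρabs : |ρ| ≤ 1 := abs_le.mpr ⟨hρ1, hρ2⟩
  have hev : Even (2 * k) := even_two_mul k
  have hεpos : (0 : ℝ) < 1 - ε := by linarith
  set c1 : ℝ := 2 ^ (2 * k) / (1 - ε) ^ (2 * k) with hc1
  have hc1nn : 0 ≤ c1 := by positivity
  have hS : ∀ n, MeasurableSet {ω | ε ≤ |G n ω - 1|} := fun n =>
    measurableSet_le measurable_const (((hGmeas n).sub measurable_const).abs)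
  -- integrability of LHS integrand
  have hLmeas : ∀ n, Measurable (fun ω => (F n ω / G n ω - ρ) ^ (2 * k)) := fun n =>
    (((hFmeas n).div (hGmeas n)).sub measurable_const).pow_const _
  have hLint : ∀ n, Integrable (fun ω => (F n ω / G n ω - ρ) ^ (2 * k)) μ := by
    intro n
    apply Integrable.mono' (integrable_const ((2 : ℝ) ^ (2 * k)))
      (hLmeas n).aestronglyMeasurable
    filter_upwards [hratio n] with ω hr
    rw [Real.norm_eq_abs, abs_pow]
    apply pow_le_pow_left₀ (abs_nonneg _)
    calc |F n ω / G n ω - ρ| ≤ |F n ω / G n ω| + |ρ| := abs_sub _ _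
      _ ≤ 2 := by linarith
  -- the dominating function and its integral
  have hBint : ∀ n, Integrable (fun ω =>
      c1 * ((F n ω - ρ) ^ (2 * k) + ρ ^ (2 * k) * (G n ω - 1) ^ (2 * k)) +
        Set.indicator {ω | ε ≤ |G n ω - 1|} (fun _ => (2 : ℝ) ^ (2 * k)) ω) μ := by
    intro n
    exact (((hFint n).add ((hGint n).const_mul _)).const_mul c1).add
      ((integrable_const _).indicator (hS n))
  have key : ∀ n, ∫ ω, (F n ω / G n ω - ρ) ^ (2 * k) ∂μ ≤
      c1 * ((∫ ω, (F n ω - ρ) ^ (2 * k) ∂μ) + ρ ^ (2 * k) * ∫ ω, (G n ω - 1) ^ (2 * k) ∂μ) +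
        2 ^ (2 * k) * (μ {ω | ε ≤ |G n ω - 1|}).toReal := by
    intro n
    have hmono : ∫ ω, (F n ω / G n ω - ρ) ^ (2 * k) ∂μ ≤
        ∫ ω, (c1 * ((F n ω - ρ) ^ (2 * k) + ρ ^ (2 * k) * (G n ω - 1) ^ (2 * k)) +
          Set.indicator {ω | ε ≤ |G n ω - 1|} (fun _ => (2 : ℝ) ^ (2 * k)) ω) ∂μ := by
      apply integral_mono_ae (hLint n) (hBint n)
      filter_upwards [hG0 n, hratio n] with ω hg hr
      by_cases hca : ε ≤ |G n ω - 1|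
      · rw [Set.indicator_of_mem (by exact hca)]
        have h1 : (F n ω / G n ω - ρ) ^ (2 * k) ≤ 2 ^ (2 * k) := by
          rw [← hev.pow_abs]
          apply pow_le_pow_left₀ (abs_nonneg _)
          calc |F n ω / G n ω - ρ| ≤ |F n ω / G n ω| + |ρ| := abs_sub _ _
            _ ≤ 2 := by linarith
        have h2 : 0 ≤ c1 * ((F n ω - ρ) ^ (2 * k) + ρ ^ (2 * k) * (G n ω - 1) ^ (2 * k)) := by
          apply mul_nonneg hc1nn
          have := hev.pow_nonneg (F n ω - ρ)
          have := hev.pow_nonneg (G n ω - 1)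
          have := hev.pow_nonneg ρ
          positivity
        linarith
      · rw [Set.indicator_of_notMem (by exact hca)]
        have := st17_ptwise k ρ ε (F n ω) (G n ω) hρabs hε0 hε1 hg (not_le.mp hca)
        rw [← hc1] at this
        linarith
    calc ∫ ω, (F n ω / G n ω - ρ) ^ (2 * k) ∂μ ≤ _ := hmono
      _ = c1 * ((∫ ω, (F n ω - ρ) ^ (2 * k) ∂μ) + ρ ^ (2 * k) * ∫ ω, (G n ω - 1) ^ (2 * k) ∂μ) +
            2 ^ (2 * k) * (μ {ω | ε ≤ |G n ω - 1|}).toReal := by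
          have i2 : Integrable (fun ω =>
              Set.indicator {ω | ε ≤ |G n ω - 1|} (fun _ => (2 : ℝ) ^ (2 * k)) ω) μ :=
            (integrable_const _).indicator (hS n)
          have iG : Integrable (fun ω => ρ ^ (2 * k) * (G n ω - 1) ^ (2 * k)) μ :=
            (hGint n).const_mul _
          have i1 : Integrable (fun ω =>
              c1 * ((F n ω - ρ) ^ (2 * k) + ρ ^ (2 * k) * (G n ω - 1) ^ (2 * k))) μ :=
            ((hFint n).add iG).const_mul c1
          rw [integral_add i1 i2, integral_const_mul,
            integral_add (hFint n) iG, integral_const_mul,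
            integral_indicator_const _ (hS n), smul_eq_mul, measureReal_def]
          ring
  refine ⟨key, ?_⟩
  intro ha hb
  -- Chebyshev bound on the tail probability
  have cheb : ∀ n, (μ {ω | ε ≤ |G n ω - 1|}).toReal ≤
      (ε ^ (2 * k))⁻¹ * ∫ ω, (G n ω - 1) ^ (2 * k) ∂μ := by
    intro n
    have h1 : ∫ ω, Set.indicator {ω | ε ≤ |G n ω - 1|} (fun _ => ε ^ (2 * k)) ω ∂μ ≤
        ∫ ω, (G n ω - 1) ^ (2 * k) ∂μ := by
      apply integral_mono ((integrable_const _).indicator (hS n)) (hGint n)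
      intro ω
      by_cases hca : ε ≤ |G n ω - 1|
      · rw [Set.indicator_of_mem (by exact hca)]
        simp only
        rw [← hev.pow_abs (G n ω - 1)]
        exact pow_le_pow_left₀ hε0.le hca _
      · rw [Set.indicator_of_notMem (by exact hca)]
        exact hev.pow_nonneg _
    rw [integral_indicator_const _ (hS n), smul_eq_mul] at h1
    have hpos : (0 : ℝ) < ε ^ (2 * k) := by positivity
    calc (μ {ω | ε ≤ |G n ω - 1|}).toReal ≤
        (∫ ω, (G n ω - 1) ^ (2 * k) ∂μ) / ε ^ (2 * k) := (le_div_iff₀ hpos).mpr h1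
      _ = (ε ^ (2 * k))⁻¹ * ∫ ω, (G n ω - 1) ^ (2 * k) ∂μ := by
          rw [div_eq_mul_inv, mul_comm]
  set a : ℕ → ℝ := fun n => ∫ ω, (F n ω - ρ) ^ (2 * k) ∂μ with haa
  set b : ℕ → ℝ := fun n => ∫ ω, (G n ω - 1) ^ (2 * k) ∂μ with hbb
  have hanon : ∀ n, 0 ≤ a n := fun n => integral_nonneg (fun ω => hev.pow_nonneg _)
  have hbnon : ∀ n, 0 ≤ b n := fun n => integral_nonneg (fun ω => hev.pow_nonneg _)
  have hLnon : ∀ n, 0 ≤ ∫ ω, (F n ω / G n ω - ρ) ^ (2 * k) ∂μ :=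
    fun n => integral_nonneg (fun ω => hev.pow_nonneg _)
  set h : ℕ → ℝ := fun n =>
    c1 * (a n + ρ ^ (2 * k) * b n) + 2 ^ (2 * k) * ((ε ^ (2 * k))⁻¹ * b n) with hh
  have hhO : h =O[atTop] fun n : ℕ => ((n : ℝ) ^ k)⁻¹ := by
    apply Asymptotics.IsBigO.add
    · exact ((ha.add (hb.const_mul_left _)).const_mul_left _)
    · exact ((hb.const_mul_left _).const_mul_left _)
  apply Asymptotics.IsBigO.trans _ hhO
  apply Asymptotics.isBigO_of_le atTop
  intro n
  have hle : ∫ ω, (F n ω / G n ω - ρ) ^ (2 * k) ∂μ ≤ h n := by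
    have h1 := key n
    have h2 := cheb n
    have h3 : 2 ^ (2 * k) * (μ {ω | ε ≤ |G n ω - 1|}).toReal ≤
        2 ^ (2 * k) * ((ε ^ (2 * k))⁻¹ * b n) :=
      mul_le_mul_of_nonneg_left h2 (by positivity)
    calc ∫ ω, (F n ω / G n ω - ρ) ^ (2 * k) ∂μ ≤ _ := h1
      _ ≤ h n := by rw [hh]; exact add_le_add_right h3 _
  have hhnon : 0 ≤ h n := le_trans (hLnon n) hle
  rw [Real.norm_eq_abs, Real.norm_eq_abs, abs_of_nonneg (hLnon n), abs_of_nonneg hhnon]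
  exact hle
end
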